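/- For k ∈ ℕ define S(k) := √(2^k)·∑_{i=1}^{2^k − 1} 1/√i. Then the sequence k ↦ S(k) − 2·S(k−1) − S(k−1)/(2^{k−1} − 1) tends to +∞ as k → ∞. -/

import Mathlib

open Filter

lemma sqrt_two_pow (k : ℕ) : Real.sqrt (2 ^ k) = (Real.sqrt 2) ^ k := by
  induction k with
  | zero => simp
  | succ n ih =>
    rw [pow_succ, pow_succ, Real.sqrt_mul (by positivity), ih]

lemma sum_inv_sqrt_le (M : ℕ) :
    ∑ i ∈ Finset.Icc 1 M, 1 / Real.sqrt (i : ℝ) ≤ 2 * Real.sqrt M := by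
  induction M with
  | zero => simp
  | succ n ih =>
    rw [Finset.sum_Icc_succ_top (by omega)]
    have hb : (0 : ℝ) < Real.sqrt ((n : ℝ) + 1) := Real.sqrt_pos.mpr (by positivity)
    have ha : Real.sqrt (n : ℝ) ^ 2 = (n : ℝ) := Real.sq_sqrt (by positivity)
    have hb2 : Real.sqrt ((n : ℝ) + 1) ^ 2 = (n : ℝ) + 1 := Real.sq_sqrt (by positivity)
    have ha0 : (0 : ℝ) ≤ Real.sqrt (n : ℝ) := Real.sqrt_nonneg _
    push_cast
    have key : 1 / Real.sqrt ((n : ℝ) + 1) ≤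
        2 * Real.sqrt ((n : ℝ) + 1) - 2 * Real.sqrt (n : ℝ) := by
      rw [div_le_iff₀ hb]
      nlinarith [sq_nonneg (Real.sqrt ((n : ℝ) + 1) - Real.sqrt (n : ℝ))]
    push_cast at ih
    linarith

lemma key_ineq (n : ℕ) (hn : 1 ≤ n) :
    Real.sqrt 2 * (∑ j ∈ Finset.Icc 1 n, 1 / Real.sqrt (j : ℝ)) + (1 - 1 / Real.sqrt 2)
      ≤ ∑ i ∈ Finset.Icc 1 (2 * n), 1 / Real.sqrt (i : ℝ) := by
  induction n, hn using Nat.le_induction with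
  | base =>
    have h1 : (Finset.Icc 1 1 : Finset ℕ) = {1} := by decide
    have h2 : (Finset.Icc 1 (2 * 1) : Finset ℕ) = {1, 2} := by decide
    rw [h1, h2, Finset.sum_singleton, Finset.sum_pair (by norm_num)]
    have hs : (0:ℝ) < Real.sqrt 2 := by positivity
    have hs2 : Real.sqrt 2 * Real.sqrt 2 = 2 := Real.mul_self_sqrt (by norm_num)
    have e : (1 : ℝ) / Real.sqrt 2 = Real.sqrt 2 / 2 := by
      field_simp
      rw [Real.sq_sqrt (by norm_num)]
    push_cast
    rw [Real.sqrt_one, e]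
    push_cast
    linarith
  | succ n hn ih =>
    rw [show 2 * (n + 1) = (2 * n + 1) + 1 from by ring,
      Finset.sum_Icc_succ_top (by omega), Finset.sum_Icc_succ_top (by omega),
      Finset.sum_Icc_succ_top (by omega)]
    have hterm : Real.sqrt 2 * (1 / Real.sqrt ((n : ℝ) + 1)) ≤
        1 / Real.sqrt ((2 * n : ℝ) + 1) + 1 / Real.sqrt ((2 * n : ℝ) + 1 + 1) := by
      have he : Real.sqrt ((2 * n : ℝ) + 1 + 1) = Real.sqrt 2 * Real.sqrt ((n : ℝ) + 1) := by
        rw [← Real.sqrt_mul (by norm_num)]; ring_nf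
      have h1 : (0 : ℝ) < Real.sqrt ((2 * n : ℝ) + 1) := Real.sqrt_pos.mpr (by positivity)
      have h2 : (0 : ℝ) < Real.sqrt ((2 * n : ℝ) + 1 + 1) := Real.sqrt_pos.mpr (by positivity)
      have hle : Real.sqrt ((2 * n : ℝ) + 1) ≤ Real.sqrt ((2 * n : ℝ) + 1 + 1) :=
        Real.sqrt_le_sqrt (by linarith)
      have h3 : 1 / Real.sqrt ((2 * n : ℝ) + 1 + 1) ≤ 1 / Real.sqrt ((2 * n : ℝ) + 1) :=
        one_div_le_one_div_of_le h1 hle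
      have h4 : Real.sqrt 2 * (1 / Real.sqrt ((n : ℝ) + 1)) =
          2 * (1 / Real.sqrt ((2 * n : ℝ) + 1 + 1)) := by
        rw [he]
        have hs : (0 : ℝ) < Real.sqrt 2 := by positivity
        have hp : (0 : ℝ) < Real.sqrt ((n : ℝ) + 1) := Real.sqrt_pos.mpr (by positivity)
        have hs2 : Real.sqrt 2 * Real.sqrt 2 = 2 := Real.mul_self_sqrt (by norm_num)
        field_simp
        nlinarith
      rw [h4]; linarith
    push_cast
    push_cast at ih hterm
    ring_nf
    ring_nf at ih hterm
    linarith

/-- With `S k = √(2^k) · ∑_{i=1}^{2^k − 1} 1/√i`, the sequence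
`S k − 2 S (k−1) − S (k−1)/(2^{k−1} − 1)` tends to `+∞`. -/
theorem S_combination_tendsto_atTop (S : ℕ → ℝ)
    (hS : ∀ k : ℕ, S k = Real.sqrt (2 ^ k) *
      ∑ i ∈ (Finset.Icc 1 (2 ^ k - 1) : Finset ℕ), 1 / Real.sqrt (i : ℝ)) :
    Tendsto (fun k : ℕ =>
        S k - 2 * S (k - 1) - S (k - 1) / ((2 : ℝ) ^ (k - 1) - 1)) atTop atTop := by
  have c_pos : (0 : ℝ) < 1 - 1 / Real.sqrt 2 := by
    have h1 : (1 : ℝ) < Real.sqrt 2 := by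
      rw [show (1:ℝ) = Real.sqrt 1 from (Real.sqrt_one).symm]
      exact Real.sqrt_lt_sqrt (by norm_num) (by norm_num)
    have : 1 / Real.sqrt 2 < 1 := by
      rw [div_lt_one (by positivity)]; exact h1
    linarith
  -- the minorant tends to atTop
  have hmin : Tendsto (fun k : ℕ => (Real.sqrt 2) ^ k * (1 - 1 / Real.sqrt 2) - 4)
      atTop atTop := by
    apply tendsto_atTop_add_const_right
    apply Tendsto.atTop_mul_const c_pos
    exact tendsto_pow_atTop_atTop_of_one_lt (by
      rw [show (1:ℝ) = Real.sqrt 1 from (Real.sqrt_one).symm]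
      exact Real.sqrt_lt_sqrt (by norm_num) (by norm_num))
  apply tendsto_atTop_mono' atTop _ hmin
  filter_upwards [eventually_ge_atTop 2] with k hk
  set m := k - 1 with hm
  have hkm : k = m + 1 := by omega
  have hm1 : 1 ≤ m := by omega
  -- basic facts
  have hNpos : 1 ≤ 2 ^ m := Nat.one_le_two_pow
  have hN2 : 2 ≤ 2 ^ m := by calc 2 = 2^1 := rfl
                                 _ ≤ 2^m := Nat.pow_le_pow_right (by norm_num) hm1
  set n : ℕ := 2 ^ m - 1 with hn
  have hn1 : 1 ≤ n := by omega
  -- S (k-1) bounds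
  have hSm : S m = Real.sqrt (2 ^ m) * ∑ i ∈ Finset.Icc 1 n, 1 / Real.sqrt (i : ℝ) := hS m
  have hsum_nonneg : (0:ℝ) ≤ ∑ i ∈ Finset.Icc 1 n, 1 / Real.sqrt (i : ℝ) :=
    Finset.sum_nonneg fun i _ => by positivity
  have hSm_nonneg : 0 ≤ S m := by
    rw [hSm]; exact mul_nonneg (Real.sqrt_nonneg _) hsum_nonneg
  have hcastn : ((n : ℝ)) ≤ (2:ℝ) ^ m := by
    have : (n : ℝ) ≤ ((2 ^ m : ℕ) : ℝ) := by exact_mod_cast Nat.sub_le _ _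
    simpa using this
  have hSm_le : S m ≤ 2 * (2:ℝ) ^ m := by
    rw [hSm]
    calc Real.sqrt (2 ^ m) * ∑ i ∈ Finset.Icc 1 n, 1 / Real.sqrt (i : ℝ)
        ≤ Real.sqrt (2 ^ m) * (2 * Real.sqrt n) := by
          exact mul_le_mul_of_nonneg_left (sum_inv_sqrt_le n) (Real.sqrt_nonneg _)
      _ ≤ Real.sqrt (2 ^ m) * (2 * Real.sqrt ((2:ℝ) ^ m)) := by
          have := Real.sqrt_le_sqrt hcastn
          nlinarith [Real.sqrt_nonneg ((2:ℝ)^m)]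
      _ = 2 * (2:ℝ) ^ m := by
          have := Real.mul_self_sqrt (show (0:ℝ) ≤ (2:ℝ)^m by positivity)
          nlinarith
  have h2m : (2:ℝ) ≤ (2:ℝ) ^ m := by exact_mod_cast hN2
  have hdiv : S m / ((2:ℝ) ^ m - 1) ≤ 4 := by
    rw [div_le_iff₀ (by linarith)]
    nlinarith
  -- main lower bound for S k - 2 S m
  have hSk : S k = Real.sqrt (2 ^ k) *
      ∑ i ∈ (Finset.Icc 1 (2 ^ k - 1) : Finset ℕ), 1 / Real.sqrt (i : ℝ) := hS k
  have hidx : 2 ^ k - 1 = 2 * n + 1 := by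
    rw [hkm]; have : 2 ^ (m+1) = 2 * 2 ^ m := by ring
    omega
  have hsum_split : ∑ i ∈ (Finset.Icc 1 (2 ^ k - 1) : Finset ℕ), 1 / Real.sqrt (i : ℝ)
      ≥ ∑ i ∈ Finset.Icc 1 (2 * n), 1 / Real.sqrt (i : ℝ) := by
    rw [hidx, Finset.sum_Icc_succ_top (by omega)]
    have : (0:ℝ) ≤ 1 / Real.sqrt ((2 * n + 1 : ℕ) : ℝ) := by positivity
    linarith
  have hkey := key_ineq n hn1
  have hsqrtk : Real.sqrt (2 ^ k) = Real.sqrt 2 * Real.sqrt (2 ^ m) := by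
    rw [hkm, pow_succ, mul_comm ((2:ℝ)^m) 2, Real.sqrt_mul (by norm_num)]
  have hs2 : Real.sqrt 2 * Real.sqrt 2 = 2 := Real.mul_self_sqrt (by norm_num)
  have hsk_nonneg : (0:ℝ) ≤ Real.sqrt (2^k) := Real.sqrt_nonneg _
  have hSk_ge : S k ≥ 2 * S m + Real.sqrt (2 ^ k) * (1 - 1 / Real.sqrt 2) := by
    rw [hSk, hSm]
    calc Real.sqrt (2 ^ k) * ∑ i ∈ (Finset.Icc 1 (2 ^ k - 1) : Finset ℕ), 1 / Real.sqrt (i : ℝ)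
        ≥ Real.sqrt (2 ^ k) * ∑ i ∈ Finset.Icc 1 (2 * n), 1 / Real.sqrt (i : ℝ) :=
          mul_le_mul_of_nonneg_left hsum_split hsk_nonneg
      _ ≥ Real.sqrt (2 ^ k) *
          (Real.sqrt 2 * (∑ j ∈ Finset.Icc 1 n, 1 / Real.sqrt (j : ℝ))
            + (1 - 1 / Real.sqrt 2)) :=
          mul_le_mul_of_nonneg_left hkey hsk_nonneg
      _ = 2 * (Real.sqrt (2 ^ m) * ∑ j ∈ Finset.Icc 1 n, 1 / Real.sqrt (j : ℝ))
            + Real.sqrt (2 ^ k) * (1 - 1 / Real.sqrt 2) := by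
          rw [hsqrtk]
          linear_combination
            (Real.sqrt ((2:ℝ) ^ m) * ∑ j ∈ Finset.Icc 1 n, 1 / Real.sqrt (j : ℝ)) * hs2
  have hsq : Real.sqrt (2 ^ k) = (Real.sqrt 2) ^ k := sqrt_two_pow k
  calc (Real.sqrt 2) ^ k * (1 - 1 / Real.sqrt 2) - 4
      ≤ Real.sqrt (2 ^ k) * (1 - 1 / Real.sqrt 2) - S m / ((2:ℝ)^m - 1) := by
        rw [hsq]; linarith
    _ ≤ S k - 2 * S m - S m / ((2:ℝ)^m - 1) := by linarith
    _ = S k - 2 * S (k-1) - S (k-1) / ((2:ℝ)^(k-1) - 1) := by rw [← hm]
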